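/- Let G be a group generated by a subset X ⊆ G such that the Cayley graph Γ(G, X) (vertex set G, with an edge between distinct g, h ∈ G whenever g⁻¹h ∈ X or h⁻¹g ∈ X), with shortest-path metric d_X, is a quasi-tree, i.e., quasi-isometric to a simplicial tree. Then every finitely generated subgroup H ≤ G is quasi-convex in Γ(G, X): there exists σ > 0 such that for any u, v ∈ H, every geodesic walk in Γ(G, X) from u to v has all of its vertices at distance at most σ from H. -/

import Mathlib

/-- The Cayley graph of a group `G` with respect to a subset `X`: vertices are the
elements of `G`, and distinct `g`, `h` are adjacent when `g⁻¹h ∈ X` or `h⁻¹g ∈ X`. -/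
def cayleyGraph (G : Type*) [Group G] (X : Set G) : SimpleGraph G where
  Adj g h := g ≠ h ∧ (g⁻¹ * h ∈ X ∨ h⁻¹ * g ∈ X)
  symm := by
    constructor
    intro g h ⟨hne, hor⟩
    exact ⟨hne.symm, hor.symm⟩
  loopless := by
    constructor
    intro g ⟨hne, _⟩
    exact hne rfl

/-- A connected simple graph is a quasi-tree if its vertex set with the shortest-path
metric is quasi-isometric to (the vertex set of) a simplicial tree. -/
def SimpleGraph.IsQuasiTree {V : Type*} (G : SimpleGraph V) : Prop :=
  G.Connected ∧
  ∃ (V' : Type) (T : SimpleGraph V'), T.IsTree ∧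
    ∃ (q : V → V') (lam C : ℝ), 1 ≤ lam ∧ 0 ≤ C ∧
      (∀ a b : V,
        (1 / lam) * (G.dist a b : ℝ) - C ≤ (T.dist (q a) (q b) : ℝ) ∧
        (T.dist (q a) (q b) : ℝ) ≤ lam * (G.dist a b : ℝ) + C) ∧
      (∀ t : V', ∃ a : V, (T.dist t (q a) : ℝ) ≤ C)

open SimpleGraph

section TreeLemmas

variable {V : Type*} [DecidableEq V] {T : SimpleGraph V}

lemma path_length_eq_dist (hT : T.IsTree) {u v : V} (p : T.Walk u v) (hp : p.IsPath) :
    p.length = T.dist u v := by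
  obtain ⟨q, hq⟩ := (Reachable.exists_walk_length_eq_dist ⟨p⟩)
  have h1 : T.dist u v ≤ p.length := SimpleGraph.dist_le p
  have h2 : q.bypass.IsPath := q.bypass_isPath
  have h3 : p = q.bypass := ((hT.existsUnique_path u v).unique hp h2)
  have h4 : q.bypass.length ≤ q.length := q.length_bypass_le
  have h5 : p.length = q.bypass.length := by rw [h3]
  omega

lemma dist_add_of_mem_support (hT : T.IsTree) {u v m : V} (p : T.Walk u v) (hp : p.IsPath)
    (hm : m ∈ p.support) : T.dist u v = T.dist u m + T.dist m v := by
  classical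
  have h1 := hp.takeUntil hm
  have h2 := hp.dropUntil hm
  have h3 := congrArg Walk.length (p.take_spec hm)
  rw [Walk.length_append] at h3
  rw [← path_length_eq_dist hT p hp, ← path_length_eq_dist hT _ h1,
    ← path_length_eq_dist hT _ h2]
  omega

lemma getVert_one_takeUntil {u v c : V} (p : T.Walk u v) (hc : c ∈ p.support) (hne : c ≠ u) :
    (p.takeUntil c hc).getVert 1 = p.getVert 1 := by
  classical
  have h3 := p.take_spec hc
  have hlen : (p.takeUntil c hc).length ≠ 0 := by
    intro h0
    exact hne (Walk.eq_of_length_eq_zero h0).symm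
  conv_rhs => rw [← h3]
  rw [Walk.getVert_append]
  by_cases h1 : 1 < (p.takeUntil c hc).length
  · rw [if_pos h1]
  · have hl : (p.takeUntil c hc).length = 1 := by omega
    rw [if_neg h1, hl]
    simp only [Nat.sub_self, Walk.getVert_zero]
    rw [← hl, Walk.getVert_length]

lemma exists_branch_vertex (hT : T.IsTree) {w x : V} (P : T.Walk w x) :
    ∀ {y : V} (Q : T.Walk w y), P.IsPath → Q.IsPath →
      ∃ m, m ∈ P.support ∧ m ∈ Q.support ∧ T.dist x m + T.dist m y ≤ T.dist x y := by
  classical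
  induction P with
  | nil =>
    intro y Q _ _
    refine ⟨_, Walk.start_mem_support _, Walk.start_mem_support _, ?_⟩
    simp
  | @cons w b x hadj P ih =>
    intro y Q hP hQ
    cases Q with
    | nil =>
      refine ⟨w, Walk.start_mem_support _, Walk.start_mem_support _, ?_⟩
      simp [SimpleGraph.dist_comm]
    | @cons _ b' _ hadj' Q =>
      by_cases hbb : b = b'
      · subst hbb
        obtain ⟨m, hm1, hm2, hm3⟩ := ih Q (hP.of_cons) (hQ.of_cons)
        exact ⟨m, List.mem_cons_of_mem _ hm1, List.mem_cons_of_mem _ hm2, hm3⟩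
      · -- branch at w
        refine ⟨w, Walk.start_mem_support _, Walk.start_mem_support _, ?_⟩
        -- the concatenated walk is a path
        set P' : T.Walk w x := Walk.cons hadj P with hP'def
        set Q' : T.Walk w y := Walk.cons hadj' Q with hQ'def
        have hkey : ∀ c, c ∈ P'.support → c ∈ Q'.support → c = w := by
          intro c hcP hcQ
          by_contra hcw
          have e1 : P'.takeUntil c hcP = Q'.takeUntil c hcQ := by
            exact ((hT.existsUnique_path w c).unique (hP.takeUntil hcP) (hQ.takeUntil hcQ))
          have g1 : (P'.takeUntil c hcP).getVert 1 = P'.getVert 1 :=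
            getVert_one_takeUntil P' hcP hcw
          have g2 : (Q'.takeUntil c hcQ).getVert 1 = Q'.getVert 1 :=
            getVert_one_takeUntil Q' hcQ hcw
          have : P'.getVert 1 = Q'.getVert 1 := by rw [← g1, ← g2, e1]
          simp only [hP'def, hQ'def, Walk.getVert_cons_succ, Walk.getVert_zero] at this
          exact hbb this
        have hpath : (P'.reverse.append Q').IsPath := by
          rw [Walk.isPath_def, Walk.support_append]
          rw [List.nodup_append]
          refine ⟨by simpa [Walk.isPath_def] using hP.reverse, ?_, ?_⟩
          · exact List.Nodup.sublist (List.tail_sublist _) hQ.support_nodup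
          · intro c hc1 d hc2 hcd
            subst hcd
            have hcP : c ∈ P'.support := by simpa using hc1
            have hcQ : c ∈ Q'.support := List.mem_of_mem_tail hc2
            have hcw : c = w := hkey c hcP hcQ
            subst hcw
            have hnd := hQ.support_nodup
            rw [Q'.support_eq_cons] at hnd
            exact (List.nodup_cons.mp hnd).1 hc2
        have hdxy : T.dist x y = P'.length + Q'.length := by
          have := path_length_eq_dist hT _ hpath
          rw [Walk.length_append, Walk.length_reverse] at this
          omega
        have hdxw : T.dist x w = P'.length := by
          rw [SimpleGraph.dist_comm]
          exact (path_length_eq_dist hT _ hP).symm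
        have hdwy : T.dist w y = Q'.length := (path_length_eq_dist hT _ hQ).symm
        omega

lemma mem_support_of_dist_le (hT : T.IsTree) {w z y m1 m2 : V} (R : T.Walk w z) (Q : T.Walk w y)
    (hR : R.IsPath) (hQ : Q.IsPath) (h1 : m1 ∈ R.support) (h2 : m2 ∈ R.support)
    (hq : m2 ∈ Q.support) (hle : T.dist w m1 ≤ T.dist w m2) : m1 ∈ Q.support := by
  classical
  have hc := hT.isConnected
  have hsplit : m1 ∈ (R.takeUntil m2 h2).support ∨ m1 ∈ (R.dropUntil m2 h2).support := by
    rw [← Walk.mem_support_append_iff, R.take_spec h2]; exact h1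
  have hmem : m1 ∈ (R.takeUntil m2 h2).support := by
    rcases hsplit with h | h
    · exact h
    · -- m1 on segment from m2 to z; show m1 = m2
      have e1 : T.dist w z = T.dist w m1 + T.dist m1 z :=
        dist_add_of_mem_support hT R hR h1
      have e2 : T.dist w z = T.dist w m2 + T.dist m2 z :=
        dist_add_of_mem_support hT R hR h2
      have e3 : T.dist m2 z = T.dist m2 m1 + T.dist m1 z :=
        dist_add_of_mem_support hT _ (hR.dropUntil h2) h
      have e4 : T.dist m2 m1 = 0 := by omega
      have : m2 = m1 := (hc.dist_eq_zero_iff).mp e4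
      rw [← this]
      exact Walk.end_mem_support _
  have hQtake : R.takeUntil m2 h2 = Q.takeUntil m2 hq :=
    (hT.existsUnique_path w m2).unique (hR.takeUntil h2) (hQ.takeUntil hq)
  rw [hQtake] at hmem
  exact Q.support_takeUntil_subset hq hmem

lemma tree_four_point (hT : T.IsTree) (w x y z : V) :
    T.dist x y + T.dist w z ≤ max (T.dist x z + T.dist w y) (T.dist z y + T.dist w x) := by
  classical
  have hc := hT.isConnected
  obtain ⟨P, hP, -⟩ := hT.existsUnique_path w x
  obtain ⟨Q, hQ, -⟩ := hT.existsUnique_path w y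
  obtain ⟨R, hR, -⟩ := hT.existsUnique_path w z
  obtain ⟨m1, hm1P, hm1R, hb1⟩ := exists_branch_vertex hT P R hP hR
  obtain ⟨m2, hm2Q, hm2R, hb2⟩ := exists_branch_vertex hT Q R hQ hR
  rcases le_total (T.dist w m1) (T.dist w m2) with hle | hle
  · have hm1Q : m1 ∈ Q.support := mem_support_of_dist_le hT R Q hR hQ hm1R hm2R hm2Q hle
    refine le_trans ?_ (le_max_left _ _)
    have e1 : T.dist w x = T.dist w m1 + T.dist m1 x := dist_add_of_mem_support hT P hP hm1P
    have e2 : T.dist w y = T.dist w m1 + T.dist m1 y := dist_add_of_mem_support hT Q hQ hm1Q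
    have e3 : T.dist w z = T.dist w m1 + T.dist m1 z := dist_add_of_mem_support hT R hR hm1R
    have t1 : T.dist x y ≤ T.dist x m1 + T.dist m1 y := hc.dist_triangle
    have c1 : T.dist x m1 = T.dist m1 x := SimpleGraph.dist_comm
    omega
  · have hm2P : m2 ∈ P.support := mem_support_of_dist_le hT R P hR hP hm2R hm1R hm1P hle
    refine le_trans ?_ (le_max_right _ _)
    have e1 : T.dist w x = T.dist w m2 + T.dist m2 x := dist_add_of_mem_support hT P hP hm2P
    have e2 : T.dist w y = T.dist w m2 + T.dist m2 y := dist_add_of_mem_support hT Q hQ hm2Q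
    have e3 : T.dist w z = T.dist w m2 + T.dist m2 z := dist_add_of_mem_support hT R hR hm2R
    have t1 : T.dist x y ≤ T.dist x m2 + T.dist m2 y := hc.dist_triangle
    have c1 : T.dist y m2 = T.dist m2 y := SimpleGraph.dist_comm
    have c2 : T.dist z m2 = T.dist m2 z := SimpleGraph.dist_comm
    have c3 : T.dist z y = T.dist y z := SimpleGraph.dist_comm
    have c4 : T.dist x m2 = T.dist m2 x := SimpleGraph.dist_comm
    omega

end TreeLemmas

section WalkDist

variable {V : Type*} {Γ : SimpleGraph V}

lemma dist_getVert_le (hconn : Γ.Connected) {u v : V} (p : Γ.Walk u v) (i : ℕ) :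
    ∀ k : ℕ, Γ.dist (p.getVert i) (p.getVert (i + k)) ≤ k := by
  intro k
  induction k with
  | zero => simp
  | succ k ih =>
    have step : Γ.dist (p.getVert (i + k)) (p.getVert (i + k + 1)) ≤ 1 := by
      by_cases h : i + k < p.length
      · exact dist_le (p.adj_getVert_succ h).toWalk
      · have h1 : p.getVert (i + k) = v := p.getVert_of_length_le (by omega)
        have h2 : p.getVert (i + k + 1) = v := p.getVert_of_length_le (by omega)
        rw [h1, h2, SimpleGraph.dist_self]
        omega
    calc Γ.dist (p.getVert i) (p.getVert (i + (k + 1)))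
        ≤ Γ.dist (p.getVert i) (p.getVert (i + k))
          + Γ.dist (p.getVert (i + k)) (p.getVert (i + k + 1)) := by
          have := hconn.dist_triangle (u := p.getVert i) (v := p.getVert (i + k))
            (w := p.getVert (i + k + 1))
          have e : i + (k + 1) = i + k + 1 := by omega
          rw [e]
          exact this
      _ ≤ k + 1 := by omega

lemma geodesic_getVert_dist (hconn : Γ.Connected) {u v : V} (p : Γ.Walk u v)
    (hp : p.length = Γ.dist u v) {i j : ℕ} (hij : i ≤ j) (hj : j ≤ p.length) :
    Γ.dist (p.getVert i) (p.getVert j) = j - i := by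
  have h1 : Γ.dist (p.getVert i) (p.getVert j) ≤ j - i := by
    have := dist_getVert_le hconn p i (j - i)
    rwa [Nat.add_sub_cancel' hij] at this
  have h2 : Γ.dist u (p.getVert i) ≤ i := by
    have := dist_getVert_le hconn p 0 i
    simpa using this
  have h3 : Γ.dist (p.getVert j) v ≤ p.length - j := by
    have := dist_getVert_le hconn p j (p.length - j)
    rw [Nat.add_sub_cancel' hj, p.getVert_length] at this
    exact this
  have h4 : Γ.dist u v ≤ Γ.dist u (p.getVert i) + Γ.dist (p.getVert i) (p.getVert j)
      + Γ.dist (p.getVert j) v := by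
    have t1 := hconn.dist_triangle (u := u) (v := p.getVert i) (w := p.getVert j)
    have t2 := hconn.dist_triangle (u := u) (v := p.getVert j) (w := v)
    omega
  omega

end WalkDist

section CayleyInv

variable {G : Type*} [Group G] (X : Set G)

/-- Left multiplication as a graph homomorphism of the Cayley graph. -/
def cayleyMulHom (g : G) : cayleyGraph G X →g cayleyGraph G X where
  toFun x := g * x
  map_rel' := by
    rintro x y ⟨hne, hor⟩
    refine ⟨fun h => hne (mul_left_cancel h), ?_⟩
    have e1 : (g * x)⁻¹ * (g * y) = x⁻¹ * y := by group
    have e2 : (g * y)⁻¹ * (g * x) = y⁻¹ * x := by group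
    rw [e1, e2]
    exact hor

lemma cayley_dist_mul_le (hconn : (cayleyGraph G X).Connected) (g a b : G) :
    (cayleyGraph G X).dist (g * a) (g * b) ≤ (cayleyGraph G X).dist a b := by
  obtain ⟨p, hp⟩ := (hconn a b).exists_walk_length_eq_dist
  calc (cayleyGraph G X).dist (g * a) (g * b) ≤ (p.map (cayleyMulHom X g)).length :=
        dist_le _
    _ = p.length := Walk.length_map _ _
    _ = (cayleyGraph G X).dist a b := hp

lemma cayley_dist_mul (hconn : (cayleyGraph G X).Connected) (g a b : G) :
    (cayleyGraph G X).dist (g * a) (g * b) = (cayleyGraph G X).dist a b := by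
  refine le_antisymm (cayley_dist_mul_le X hconn g a b) ?_
  have := cayley_dist_mul_le X hconn g⁻¹ (g * a) (g * b)
  simpa [mul_assoc] using this

end CayleyInv

/-- If the Cayley graph `Γ(G,X)` is a quasi-tree, then every finitely
generated subgroup `H ≤ G` is quasi-convex in `Γ(G,X)`. -/
theorem fg_subgroup_quasiconvex_in_quasiTree_cayley
    {G : Type*} [Group G] (X : Set G) (hX : Subgroup.closure X = ⊤)
    (hqt : (cayleyGraph G X).IsQuasiTree)
    (H : Subgroup G) (hH : H.FG) :
    ∃ σ : ℝ, 0 < σ ∧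
      ∀ u ∈ H, ∀ v ∈ H, ∀ p : (cayleyGraph G X).Walk u v,
        p.length = (cayleyGraph G X).dist u v →
          ∀ z ∈ p.support, ∃ s ∈ H, ((cayleyGraph G X).dist z s : ℝ) ≤ σ := by
  classical
  obtain ⟨hconn, V', T, hT, q, lam, C, hlam, hC, hqi, -⟩ := hqt
  obtain ⟨S, hS⟩ := hH
  have hlam0 : (0:ℝ) < lam := by linarith
  have hTc := hT.isConnected
  set Γ := cayleyGraph G X with hΓdef
  set D : G → G → ℝ := fun a b => ((T.dist (q a) (q b) : ℕ) : ℝ) with hD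
  have hDsymm : ∀ a b, D a b = D b a := by
    intro a b; simp only [hD]; norm_cast; exact SimpleGraph.dist_comm
  have hDtri : ∀ a b c, D a c ≤ D a b + D b c := by
    intro a b c; simp only [hD]
    have := hTc.dist_triangle (u := q a) (v := q b) (w := q c)
    exact_mod_cast this
  have hDself : ∀ a, D a a = 0 := by intro a; simp [hD]
  set gp : G → G → G → ℝ := fun w a b => D a w + D b w - D a b with hgp
  have hgpsymm : ∀ w a b, gp w a b = gp w b a := by
    intro w a b; simp only [hgp]; rw [hDsymm a b]; ring
  have hgp_le : ∀ w a b, gp w a b ≤ 2 * D a w := by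
    intro w a b; simp only [hgp]
    have h1 := hDtri b a w
    have h2 := hDsymm a b
    linarith
  have hhyp : ∀ w a b c, min (gp w a c) (gp w c b) ≤ gp w a b := by
    intro w a b c
    have h4 := tree_four_point hT (q w) (q a) (q b) (q c)
    have c1 : ((T.dist (q a) (q w) : ℕ) : ℝ) = ((T.dist (q w) (q a) : ℕ) : ℝ) := by
      norm_cast; exact SimpleGraph.dist_comm
    have c2 : ((T.dist (q b) (q w) : ℕ) : ℝ) = ((T.dist (q w) (q b) : ℕ) : ℝ) := by
      norm_cast; exact SimpleGraph.dist_comm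
    have c3 : ((T.dist (q c) (q w) : ℕ) : ℝ) = ((T.dist (q w) (q c) : ℕ) : ℝ) := by
      norm_cast; exact SimpleGraph.dist_comm
    simp only [hgp, hD]
    rcases le_max_iff.mp h4 with h | h
    · refine le_trans (min_le_left _ _) ?_
      have h' : ((T.dist (q a) (q b) : ℕ) : ℝ) + ((T.dist (q w) (q c) : ℕ) : ℝ) ≤
          ((T.dist (q a) (q c) : ℕ) : ℝ) + ((T.dist (q w) (q b) : ℕ) : ℝ) := by
        exact_mod_cast h
      linarith
    · refine le_trans (min_le_right _ _) ?_
      have h' : ((T.dist (q a) (q b) : ℕ) : ℝ) + ((T.dist (q w) (q c) : ℕ) : ℝ) ≤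
          ((T.dist (q c) (q b) : ℕ) : ℝ) + ((T.dist (q w) (q a) : ℕ) : ℝ) := by
        exact_mod_cast h
      linarith
  have chainmin : ∀ (w : G) (cc : ℕ → G) (m : ℕ), 1 ≤ m →
      ∃ k, k < m ∧ gp w (cc k) (cc (k+1)) ≤ gp w (cc 0) (cc m) := by
    intro w cc m hm
    induction m with
    | zero => omega
    | succ m ih =>
      rcases Nat.eq_zero_or_pos m with h0 | h0
      · subst h0; exact ⟨0, Nat.zero_lt_one, le_refl _⟩
      · have hmin := hhyp w (cc 0) (cc (m+1)) (cc m)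
        rcases le_or_gt (gp w (cc m) (cc (m+1))) (gp w (cc 0) (cc (m+1))) with h | h
        · exact ⟨m, by omega, h⟩
        · obtain ⟨k, hk1, hk2⟩ := ih h0
          refine ⟨k, by omega, le_trans hk2 ?_⟩
          rcases min_le_iff.mp hmin with h2 | h2
          · exact h2
          · linarith
  have hup : ∀ a b : G, D a b ≤ lam * ((Γ.dist a b : ℕ) : ℝ) + C := by
    intro a b
    simp only [hD]
    exact (hqi a b).2
  have hlow : ∀ a b : G, ((Γ.dist a b : ℕ) : ℝ) ≤ lam * (D a b + C) := by
    intro a b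
    have h := (hqi a b).1
    have h2 : (1 / lam) * ((Γ.dist a b : ℕ) : ℝ) ≤ D a b + C := by
      simp only [hD]; linarith
    have h3 := mul_le_mul_of_nonneg_left h2 hlam0.le
    rw [← mul_assoc, mul_one_div_cancel hlam0.ne', one_mul] at h3
    exact h3
  have hmulinv : ∀ g a b : G, Γ.dist (g * a) (g * b) = Γ.dist a b :=
    fun g a b => cayley_dist_mul X hconn g a b
  set M : ℕ := ∑ s ∈ S, Γ.dist 1 s with hM
  have hstep1 : ∀ y : G, (y ∈ (S : Set G) ∨ y⁻¹ ∈ (S : Set G)) → Γ.dist 1 y ≤ M := by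
    intro y hy
    have hsum : ∀ x ∈ S, Γ.dist 1 x ≤ M := by
      intro x hx
      exact Finset.single_le_sum (f := fun s => Γ.dist 1 s) (fun i _ => Nat.zero_le _) hx
    rcases hy with hy | hy
    · exact hsum y hy
    · have h1 := hmulinv y⁻¹ 1 y
      have e : Γ.dist 1 y = Γ.dist 1 y⁻¹ := by
        conv_lhs => rw [← h1]
        rw [mul_one, inv_mul_cancel y]
        exact SimpleGraph.dist_comm
      rw [e]; exact hsum _ hy
  set R : ℝ := 2 * lam ^ 2 * (2 * (lam + C) + C) + 2 * C with hR
  have hR0 : 0 ≤ R := by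
    have h2 : (0:ℝ) ≤ 2*(lam+C)+C := by linarith
    have h4 : 0 ≤ 2 * lam ^ 2 * (2*(lam+C)+C) :=
      mul_nonneg (by positivity : (0:ℝ) ≤ 2 * lam ^ 2) h2
    rw [hR]
    linarith
  have hM0 : (0:ℝ) ≤ (M:ℝ) := Nat.cast_nonneg M
  have hlamM : 0 ≤ lam * (M:ℝ) := mul_nonneg hlam0.le hM0
  set σ : ℝ := lam * ((R + 2 * (lam * (M:ℝ) + C)) / 2 + C) + 1 with hσ
  have hinner0 : 0 ≤ (R + 2 * (lam * (M:ℝ) + C)) / 2 + C := by linarith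
  have hσ1 : 1 ≤ σ := by
    have h := mul_nonneg hlam0.le hinner0
    rw [hσ]
    linarith
  refine ⟨σ, by linarith, ?_⟩
  intro u hu v hv p hp z hz
  obtain ⟨j, hj, hjn⟩ := Walk.mem_support_iff_exists_getVert.mp hz
  set n := p.length with hn
  have hgeo : ∀ i k : ℕ, i ≤ k → k ≤ n → Γ.dist (p.getVert i) (p.getVert k) = k - i :=
    fun i k hik hk => geodesic_getVert_dist hconn p hp hik hk
  have huv : u⁻¹ * v ∈ Subgroup.closure (S : Set G) := by
    rw [hS]; exact mul_mem (inv_mem hu) hv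
  have huv' : u⁻¹ * v ∈ Submonoid.closure ((S : Set G) ∪ (S : Set G)⁻¹) := by
    rw [← Subgroup.closure_toSubmonoid]; exact huv
  obtain ⟨l, hl, hlprod⟩ := Submonoid.exists_list_of_mem_closure huv'
  set cc : ℕ → G := fun k => u * (l.take k).prod with hccdef
  have hcc0 : cc 0 = u := by simp [hccdef]
  have hccn : cc l.length = v := by
    simp only [hccdef, List.take_length, hlprod]
    group
  have hccH : ∀ k, cc k ∈ H := by
    intro k
    refine mul_mem hu (Subgroup.list_prod_mem _ ?_)
    intro x hx
    have hxl : x ∈ l := List.take_subset k l hx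
    rcases hl x hxl with h | h
    · exact hS ▸ Subgroup.subset_closure h
    · rw [Set.mem_inv] at h
      exact (inv_mem_iff).mp (hS ▸ Subgroup.subset_closure h)
  have hccstep : ∀ k, (hk : k < l.length) → Γ.dist (cc k) (cc (k+1)) ≤ M := by
    intro k hk
    have e : cc (k+1) = cc k * l[k]'hk := by
      simp only [hccdef]
      rw [List.prod_take_succ l k hk, mul_assoc]
    rw [e]
    have h1 : Γ.dist (cc k) (cc k * l[k]'hk) = Γ.dist 1 (l[k]'hk) := by
      have := hmulinv (cc k) 1 (l[k]'hk)
      simpa using this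
    rw [h1]
    apply hstep1
    have hmem : l[k]'hk ∈ l := List.getElem_mem hk
    rcases hl _ hmem with h | h
    · exact Or.inl h
    · exact Or.inr (Set.mem_inv.mp h)
  have hadjD : ∀ i, i < n → D (p.getVert i) (p.getVert (i+1)) ≤ lam + C := by
    intro i hi
    have h1 : Γ.dist (p.getVert i) (p.getVert (i+1)) ≤ 1 :=
      dist_le (p.adj_getVert_succ hi).toWalk
    have h2 := hup (p.getVert i) (p.getVert (i+1))
    have h3 : ((Γ.dist (p.getVert i) (p.getVert (i+1)) : ℕ) : ℝ) ≤ 1 := by exact_mod_cast h1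
    have h4 := mul_le_mul_of_nonneg_left h3 hlam0.le
    linarith
  set r : ℝ := gp z u v with hr
  have hrR : r ≤ R := by
    rcases le_or_gt r 0 with h0 | h0
    · linarith
    set Far : ℕ → Prop := fun i => r ≤ gp z (p.getVert i) u ∧ r ≤ gp z (p.getVert i) v
      with hFar
    have hFar0 : Far 0 := by
      simp only [hFar, p.getVert_zero]
      constructor
      · have h1 := hgp_le z u v
        have e : gp z u u = 2 * D u z := by simp only [hgp]; rw [hDself]; ring
        rw [e]; rw [hr]; linarith
      · exact le_of_eq hr
    have hgvn : p.getVert n = v := by rw [hn]; exact p.getVert_length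
    have hFarn : Far n := by
      simp only [hFar, hgvn]
      constructor
      · exact le_of_eq (hr.trans (hgpsymm z u v))
      · have h1 := hgp_le z v u
        have e : gp z v v = 2 * D v z := by simp only [hgp]; rw [hDself]; ring
        have e2 : r = gp z v u := hr.trans (hgpsymm z u v)
        rw [e]; linarith [e2 ▸ h1]
    have hnotFarj : ¬ Far j := by
      simp only [hFar, hj]
      intro ⟨h1, _⟩
      have e : gp z z u = 0 := by
        simp only [hgp]
        rw [hDself, hDsymm z u]
        ring
      rw [e] at h1
      linarith
    set a := Nat.findGreatest Far j with ha
    have hFa : Far a := Nat.findGreatest_spec (Nat.zero_le j) hFar0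
    have haj : a ≤ j := Nat.findGreatest_le j
    have haltj : a < j := lt_of_le_of_ne haj fun h => hnotFarj (h ▸ hFa)
    have hnFa1 : ¬ Far (a+1) :=
      Nat.findGreatest_is_greatest (Nat.lt_succ_self a) (by omega)
    have hex : ∃ k : ℕ, Far (j + k) := ⟨n - j, by rw [Nat.add_sub_cancel' hjn]; exact hFarn⟩
    set k0 := Nat.find hex with hk0
    have hFb : Far (j + k0) := Nat.find_spec hex
    have hk0pos : 0 < k0 :=
      Nat.pos_of_ne_zero fun h => hnotFarj (by simpa [h] using hFb)
    have hk0le : k0 ≤ n - j := Nat.find_min' hex (by rw [Nat.add_sub_cancel' hjn]; exact hFarn)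
    set b := j + k0 with hb
    have hbn : b ≤ n := by omega
    have hnFb1 : ¬ Far (j + (k0 - 1)) := Nat.find_min hex (by omega)
    have key : ∀ i i', Far i → ¬ Far i' →
        gp z (p.getVert i) (p.getVert i') < r := by
      intro i i' hFi hnFi'
      simp only [hFar] at hFi
      have hnot := hnFi'
      simp only [hFar, not_and_or, not_le] at hnot
      rcases hnot with h1 | h1
      · have hmin := hhyp z (p.getVert i') u (p.getVert i)
        have h2 : min (gp z (p.getVert i') (p.getVert i)) (gp z (p.getVert i) u) < r :=
          lt_of_le_of_lt hmin h1
        rw [min_lt_iff] at h2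
        rcases h2 with h2 | h2
        · rw [hgpsymm z (p.getVert i) (p.getVert i')]; exact h2
        · exact absurd h2 (not_lt.mpr hFi.1)
      · have hmin := hhyp z (p.getVert i') v (p.getVert i)
        have h2 : min (gp z (p.getVert i') (p.getVert i)) (gp z (p.getVert i) v) < r :=
          lt_of_le_of_lt hmin h1
        rw [min_lt_iff] at h2
        rcases h2 with h2 | h2
        · rw [hgpsymm z (p.getVert i) (p.getVert i')]; exact h2
        · exact absurd h2 (not_lt.mpr hFi.2)
    have hga : gp z (p.getVert a) (p.getVert (a+1)) < r := key a (a+1) hFa hnFa1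
    have hgb : gp z (p.getVert b) (p.getVert (j + (k0-1))) < r := key b _ hFb hnFb1
    have hFa' := hFa
    have hFb' := hFb
    simp only [hFar] at hFa' hFb'
    have h2Da : 2 * D (p.getVert a) z < r + 2 * (lam + C) := by
      have t := hDtri (p.getVert a) (p.getVert (a+1)) z
      have hadj := hadjD a (by omega)
      have e : gp z (p.getVert a) (p.getVert (a+1)) =
          D (p.getVert a) z + D (p.getVert (a+1)) z - D (p.getVert a) (p.getVert (a+1)) := by
        simp only [hgp]
      linarith
    have h2Db : 2 * D (p.getVert b) z < r + 2 * (lam + C) := by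
      have t := hDtri (p.getVert b) (p.getVert (j + (k0-1))) z
      have hb1 : (j + (k0 - 1)) + 1 = b := by omega
      have hadj := hadjD (j + (k0-1)) (by omega)
      rw [hb1] at hadj
      have hsym : D (p.getVert b) (p.getVert (j+(k0-1))) =
          D (p.getVert (j+(k0-1))) (p.getVert b) := hDsymm _ _
      have e : gp z (p.getVert b) (p.getVert (j+(k0-1))) =
          D (p.getVert b) z + D (p.getVert (j+(k0-1))) z
            - D (p.getVert b) (p.getVert (j+(k0-1))) := by
        simp only [hgp]
      linarith
    have hgab : r ≤ gp z (p.getVert a) (p.getVert b) := by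
      have hmin := hhyp z (p.getVert a) (p.getVert b) u
      have h1 : r ≤ gp z (p.getVert a) u := hFa'.1
      have h2 : r ≤ gp z u (p.getVert b) := by
        rw [hgpsymm z u (p.getVert b)]; exact hFb'.1
      exact le_trans (le_min h1 h2) hmin
    have hDab : D (p.getVert a) (p.getVert b) < 2 * (lam + C) := by
      have e : gp z (p.getVert a) (p.getVert b) =
          D (p.getVert a) z + D (p.getVert b) z - D (p.getVert a) (p.getVert b) := by
        simp only [hgp]
      linarith
    have hdistab : ((Γ.dist (p.getVert a) (p.getVert b) : ℕ) : ℝ) = (b:ℝ) - a := by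
      rw [hgeo a b (by omega) hbn, Nat.cast_sub (by omega : a ≤ b)]
    have hba : (b:ℝ) - (a:ℝ) ≤ lam * (2*(lam+C) + C) := by
      have hl2 := hlow (p.getVert a) (p.getVert b)
      rw [hdistab] at hl2
      have hmono : lam * (D (p.getVert a) (p.getVert b) + C) ≤ lam * (2*(lam+C) + C) :=
        mul_le_mul_of_nonneg_left (by linarith) hlam0.le
      linarith
    have hDaz : D (p.getVert a) z ≤ lam * ((j:ℝ) - a) + C := by
      have hu2 := hup (p.getVert a) z
      have e2 : ((Γ.dist (p.getVert a) z : ℕ) : ℝ) = (j:ℝ) - a := by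
        rw [← hj, hgeo a j haj (by omega), Nat.cast_sub haj]
      rw [e2] at hu2
      exact hu2
    have hrl : r ≤ 2 * D (p.getVert a) z :=
      le_trans hFa'.1 (hgp_le z (p.getVert a) u)
    have hjb : (j:ℝ) - (a:ℝ) ≤ (b:ℝ) - (a:ℝ) := by
      have : (j:ℝ) ≤ (b:ℝ) := by exact_mod_cast (by omega : j ≤ b)
      linarith
    have m1 : lam * ((j:ℝ) - a) ≤ lam * ((b:ℝ) - a) :=
      mul_le_mul_of_nonneg_left hjb hlam0.le
    have m2 : lam * ((b:ℝ) - a) ≤ lam * (lam * (2*(lam+C)+C)) :=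
      mul_le_mul_of_nonneg_left hba hlam0.le
    have hfinal : r ≤ 2 * (lam * (lam * (2*(lam+C)+C)) + C) := by linarith
    have hRe : 2 * (lam * (lam * (2*(lam+C)+C)) + C) = R := by rw [hR]; ring
    linarith
  by_cases hm : l.length = 0
  · have hle : l = [] := List.length_eq_zero_iff.mp hm
    have huvz : u = v := by
      have h1 : u⁻¹ * v = 1 := by rw [← hlprod, hle]; simp
      exact inv_mul_eq_one.mp h1
    refine ⟨u, hu, ?_⟩
    have hd0 : Γ.dist u v = 0 := by rw [huvz]; exact SimpleGraph.dist_self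
    have hn0 : n = 0 := by rw [hp]; exact hd0
    have hzu : z = u := by
      rw [← hj]
      have hj0 : j = 0 := by omega
      rw [hj0, p.getVert_zero]
    rw [hzu]
    simp only [SimpleGraph.dist_self]
    push_cast
    linarith
  · have hm1 : 1 ≤ l.length := by omega
    obtain ⟨k, hk, hkle⟩ := chainmin z cc l.length hm1
    refine ⟨cc k, hccH k, ?_⟩
    rw [hcc0, hccn] at hkle
    have hgpk : gp z (cc k) (cc (k+1)) ≤ R := le_trans hkle (by rw [← hr]; exact hrR)
    have hDk : D (cc k) (cc (k+1)) ≤ lam * (M:ℝ) + C := by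
      have hu2 := hup (cc k) (cc (k+1))
      have h2 : ((Γ.dist (cc k) (cc (k+1)) : ℕ) : ℝ) ≤ (M:ℝ) :=
        Nat.cast_le.mpr (hccstep k hk)
      have h3 := mul_le_mul_of_nonneg_left h2 hlam0.le
      linarith
    have h2Dk : 2 * D (cc k) z ≤ R + 2 * (lam * (M:ℝ) + C) := by
      have t := hDtri (cc k) (cc (k+1)) z
      have e : gp z (cc k) (cc (k+1)) =
          D (cc k) z + D (cc (k+1)) z - D (cc k) (cc (k+1)) := by
        simp only [hgp]
      linarith
    have hfin := hlow z (cc k)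
    have hsymmfin : D z (cc k) = D (cc k) z := hDsymm _ _
    have hDzk : D z (cc k) + C ≤ (R + 2 * (lam * (M:ℝ) + C)) / 2 + C := by linarith
    have hmono := mul_le_mul_of_nonneg_left hDzk hlam0.le
    have : ((Γ.dist z (cc k) : ℕ) : ℝ) ≤ σ - 1 := by
      rw [hσ]
      linarith
    linarith
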